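/- Let Z_i(δ_i) = ⟨c_i, G_i diag(δ_i)⟩ ⊂ ℝ^d be scaled zonotopes with c_i ∈ ℝ^d, G_i ∈ ℝ^{d×D_i}, and δ_i ∈ ℝ^{D_i} with δ_i ≥ 0 componentwise, for i = 1, …, n with n ≥ 2. Set D̄ = 1 + Σ_{i=1}^{n−1} D_i and V = [I_{D̄} −I_{D̄}]. Suppose Φ_0 ∈ ℝ^{2D̄×D_n} satisfies Φ_0 ≥ 0 entrywise, Φ_0ᵀ 1_{2D̄} ≤ 1_{D_n} componentwise, and G_n Φ_0ᵀ Vᵀ = [ (Σ_{i=1}^{n−1} c_i − c_n) G_1 ⋯ G_{n−1} ] (with the unscaled generator matrices). If moreover Φ_0ᵀ ( 1_2 ⊗ w ) ≤ δ_n componentwise, where w ∈ ℝ^{D̄} is the vector obtained by stacking the scalar 1 on top of δ_1, …, δ_{n−1} and ⊗ is the Kronecker product (so 1_2 ⊗ w stacks w twice), then Z_1(δ_1) ⊕ ⋯ ⊕ Z_{n−1}(δ_{n−1}) ⊆ Z_n(δ_n). -/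

import Mathlib

open Matrix Pointwise BigOperators

/-- The zonotope `⟨c, G⟩ = {c + Gξ : ‖ξ‖_∞ ≤ 1}` (sup norm on the Pi type). -/
def zonotope {d D : Type*} [Fintype d] [Fintype D]
    (c : d → ℝ) (G : Matrix d D ℝ) : Set (d → ℝ) :=
  {x | ∃ ξ : D → ℝ, ‖ξ‖ ≤ 1 ∧ x = c + G.mulVec ξ}

/-- Minkowski sum of a finite family of sets. -/
def minkSum {d : Type*} {ι : Type*} [Fintype ι] [AddCommMonoid d]
    (Z : ι → Set d) : Set d :=
  {x | ∃ p : ι → d, (∀ i, p i ∈ Z i) ∧ x = ∑ i, p i}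

/-- Corollary 4: if `Φ₀` certifies the *unscaled* inclusion (`Φ₀ ≥ 0`, `Φ₀ᵀ 1 ≤ 1`,
`Gₙ Φ₀ᵀ Vᵀ = [ (∑ cᵢ − cₙ)  G₁ ⋯ G_{n−1} ]`) and moreover `Φ₀ᵀ (1₂ ⊗ w) ≤ δₙ`,
where `w = (1, δ₁, …, δ_{n−1})`, then `Z₁(δ₁) ⊕ ⋯ ⊕ Z_{n−1}(δ_{n−1}) ⊆ Zₙ(δₙ)`.
Columns of the block matrix are indexed by `Unit ⊕ (Σ i, Fin (Di i))`;
`1₂ ⊗ w` is the vector `Sum.elim w w`. -/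
theorem scaled_zonotope_inclusion_Phi0
    {v m : ℕ} (hm : 1 ≤ m)  -- `m = n - 1`, so `n ≥ 2`
    {Dn : ℕ} {Di : Fin m → ℕ}
    (c : ∀ _ : Fin m, Fin v → ℝ) (G : ∀ i : Fin m, Matrix (Fin v) (Fin (Di i)) ℝ)
    (δ : ∀ i : Fin m, Fin (Di i) → ℝ) (hδ : ∀ i k, 0 ≤ δ i k)
    (cn : Fin v → ℝ) (Gn : Matrix (Fin v) (Fin Dn) ℝ)
    (δn : Fin Dn → ℝ) (hδn : ∀ j, 0 ≤ δn j)
    (Φ₀ : Matrix ((Unit ⊕ (Σ i : Fin m, Fin (Di i))) ⊕ (Unit ⊕ (Σ i : Fin m, Fin (Di i))))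
        (Fin Dn) ℝ)
    (hΦpos : ∀ r j, 0 ≤ Φ₀ r j)
    (hΦsum : ∀ j, ∑ r, Φ₀ r j ≤ 1)
    (hΦeq : Gn * (Φ₀ᵀ * (Matrix.fromCols (1 : Matrix (Unit ⊕ (Σ i : Fin m, Fin (Di i)))
        (Unit ⊕ (Σ i : Fin m, Fin (Di i))) ℝ) (-1))ᵀ : Matrix (Fin Dn) (Unit ⊕ (Σ i : Fin m, Fin (Di i))) ℝ)
      = Matrix.of fun r j =>
          Sum.elim (fun _ : Unit => (∑ i, c i r) - cn r) (fun ik => G ik.1 r ik.2) j)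
    (hΦw : ∀ j, Φ₀ᵀ.mulVec
        (Sum.elim (Sum.elim (fun _ : Unit => (1 : ℝ)) (fun ik => δ ik.1 ik.2))
                  (Sum.elim (fun _ : Unit => (1 : ℝ)) (fun ik => δ ik.1 ik.2))) j
      ≤ δn j) :
    minkSum (fun i => zonotope (c i) (G i * Matrix.diagonal (δ i)))
      ⊆ zonotope cn (Gn * Matrix.diagonal δn) := by
  rintro x ⟨p, hp, rfl⟩
  choose ξ hξ hpx using hp
  have hξabs : ∀ i k, |ξ i k| ≤ 1 := by
    intro i k
    have := (pi_norm_le_iff_of_nonneg (x := ξ i) zero_le_one).mp (hξ i) k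
    simpa [Real.norm_eq_abs] using this
  set u : (Unit ⊕ (Σ i : Fin m, Fin (Di i))) → ℝ :=
    Sum.elim (fun _ => 1) (fun ik => δ ik.1 ik.2 * ξ ik.1 ik.2) with hu
  set U : ((Unit ⊕ (Σ i : Fin m, Fin (Di i))) ⊕ (Unit ⊕ (Σ i : Fin m, Fin (Di i)))) → ℝ :=
    Sum.elim u (fun r => -u r) with hUdef
  set η : Fin Dn → ℝ := Φ₀ᵀ.mulVec U with hη
  -- bound on |u|
  have huabs : ∀ r, |u r| ≤ Sum.elim (fun _ : Unit => (1:ℝ)) (fun ik => δ ik.1 ik.2) r := by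
    rintro (r | ik)
    · simp [hu]
    · simp only [hu, Sum.elim_inr, abs_mul, abs_of_nonneg (hδ ik.1 ik.2)]
      calc δ ik.1 ik.2 * |ξ ik.1 ik.2| ≤ δ ik.1 ik.2 * 1 :=
            mul_le_mul_of_nonneg_left (hξabs ik.1 ik.2) (hδ ik.1 ik.2)
        _ = δ ik.1 ik.2 := mul_one _
  have habs : ∀ j, |η j| ≤ δn j := by
    intro j
    refine le_trans ?_ (hΦw j)
    have h1 : |η j| ≤ ∑ r, |Φ₀ᵀ j r * U r| := by
      simpa [hη, Matrix.mulVec, dotProduct] using Finset.abs_sum_le_sum_abs (fun r => Φ₀ᵀ j r * U r) Finset.univ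
    refine h1.trans ?_
    simp only [Matrix.mulVec, dotProduct]
    apply Finset.sum_le_sum
    rintro r -
    rw [abs_mul, abs_of_nonneg (by simpa [Matrix.transpose_apply] using hΦpos r j)]
    apply mul_le_mul_of_nonneg_left _ (by simpa using hΦpos r j)
    rcases r with r | r
    · simpa [hUdef] using huabs r
    · simpa [hUdef, abs_neg] using huabs r
  -- V^T u = U
  have hVu : ((Matrix.fromCols (1 : Matrix (Unit ⊕ (Σ i : Fin m, Fin (Di i)))
      (Unit ⊕ (Σ i : Fin m, Fin (Di i))) ℝ) (-1))ᵀ).mulVec u = U := by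
    rw [Matrix.transpose_fromCols, Matrix.fromRows_mulVec]
    funext r
    rcases r with r | r <;>
      simp [hUdef, Matrix.one_mulVec, Matrix.neg_mulVec, Matrix.transpose_one]
  have hGη : Gn.mulVec η = (∑ i, p i) - cn := by
    have h2 : Gn.mulVec η = (Gn * (Φ₀ᵀ * (Matrix.fromCols (1 : Matrix (Unit ⊕ (Σ i : Fin m, Fin (Di i)))
        (Unit ⊕ (Σ i : Fin m, Fin (Di i))) ℝ) (-1))ᵀ : Matrix (Fin Dn) (Unit ⊕ (Σ i : Fin m, Fin (Di i))) ℝ)).mulVec u := by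
      rw [← Matrix.mulVec_mulVec]
      congr 1
      rw [hη, ← hVu]
      exact Matrix.mulVec_mulVec _ _ _
    rw [h2, hΦeq]
    funext r
    have hpr : ∀ i, p i r = c i r + ∑ k, G i r k * (δ i k * ξ i k) := by
      intro i
      rw [hpx i]
      simp [Matrix.mulVec, dotProduct, Matrix.mul_apply, Matrix.diagonal, Finset.sum_ite_eq,
        mul_assoc]
    simp only [Matrix.mulVec, dotProduct, Fintype.sum_sum_type, Finset.univ_unique,
      Finset.sum_singleton, Matrix.of_apply, Sum.elim_inl, Sum.elim_inr, hu,
      Pi.sub_apply, Finset.sum_apply]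
    rw [Finset.sum_congr rfl (fun i _ => hpr i), Finset.sum_add_distrib]
    rw [Finset.sum_sigma']
    ring_nf
    rw [Finset.univ_sigma_univ]
  refine ⟨fun j => if δn j = 0 then 0 else η j / δn j, ?_, ?_⟩
  · rcases isEmpty_or_nonempty (Fin Dn) with h | h
    · simp [norm_le_pi_norm, Pi.norm_def]
    rw [pi_norm_le_iff_of_nonneg zero_le_one]
    intro j
    rw [Real.norm_eq_abs]
    by_cases h0 : δn j = 0
    · simp [h0]
    · have hpos : 0 < δn j := lt_of_le_of_ne (hδn j) (Ne.symm h0)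
      simp only [h0, if_false, abs_div, abs_of_pos hpos]
      rw [div_le_one hpos]
      exact habs j
  · have hdiag : (Matrix.diagonal δn).mulVec (fun j => if δn j = 0 then 0 else η j / δn j) = η := by
      funext j
      rw [Matrix.mulVec_diagonal]
      by_cases h0 : δn j = 0
      · have : |η j| ≤ 0 := by simpa [h0] using habs j
        have : η j = 0 := abs_nonpos_iff.mp this
        simp [h0, this]
      · rw [if_neg h0]
        field_simp [h0]
    rw [← Matrix.mulVec_mulVec, hdiag, hGη]
    abel
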